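/- Let H be orthogonal and Ĥ = H(I + E)⁻¹ with ε := ‖E‖ < 1. Then Ĥᵀ Ĥ = I - E - Eᵀ + Φ₁ with ‖Φ₁‖ ≤ χ(ε)ε², where χ(ε) = (3-2ε)/(1-ε)². -/

import Mathlib

open Matrix
open scoped Matrix.Norms.L2Operator

/-- If `H` is orthogonal and `Ĥ = H (I + E)⁻¹` with `ε = ‖E‖ < 1`, then
`Ĥᵀ Ĥ = I - E - Eᵀ + Φ₁` with `‖Φ₁‖ ≤ χ(ε) ε²`, where `χ(ε) = (3 - 2ε)/(1 - ε)²`. -/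
theorem stmt8 {n : ℕ} (H E : Matrix (Fin n) (Fin n) ℝ)
    (hOrth : Hᵀ * H = 1) (hE : ‖E‖ < 1)
    (Hhat : Matrix (Fin n) (Fin n) ℝ) (hHhat : Hhat = H * (1 + E)⁻¹) :
    ∃ Φ₁ : Matrix (Fin n) (Fin n) ℝ,
      Hhatᵀ * Hhat = 1 - E - Eᵀ + Φ₁ ∧
      ‖Φ₁‖ ≤ (3 - 2 * ‖E‖) / (1 - ‖E‖) ^ 2 * ‖E‖ ^ 2 := by
  classical
  have hε0 : (0:ℝ) ≤ ‖E‖ := norm_nonneg _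
  have h1ε : (0:ℝ) < 1 - ‖E‖ := by linarith
  have htr : ∀ A : Matrix (Fin n) (Fin n) ℝ, ‖Aᵀ‖ = ‖A‖ := fun A => by
    rw [← Matrix.conjTranspose_eq_transpose_of_trivial]
    exact Matrix.l2_opNorm_conjTranspose A
  have hmul : ∀ A B : Matrix (Fin n) (Fin n) ℝ, ‖A * B‖ ≤ ‖A‖ * ‖B‖ :=
    fun A B => Matrix.l2_opNorm_mul A B
  have hone : ‖(1 : Matrix (Fin n) (Fin n) ℝ)‖ ≤ 1 := by
    have h := Matrix.l2_opNorm_conjTranspose_mul_self (1 : Matrix (Fin n) (Fin n) ℝ)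
    simp only [Matrix.conjTranspose_one, mul_one] at h
    nlinarith [norm_nonneg (1 : Matrix (Fin n) (Fin n) ℝ)]
  have hEneg : ‖(-E)‖ < 1 := by simpa using hE
  have hu : IsUnit (1 + E) := by
    have := (Units.oneSub (-E) hEneg).isUnit
    simpa [sub_neg_eq_add] using this
  set B := (1 + E)⁻¹ with hBdef
  have hBl : B * (1 + E) = 1 := Matrix.nonsing_inv_mul _ ((Matrix.isUnit_iff_isUnit_det _).mp hu)
  have hBr : (1 + E) * B = 1 := Matrix.mul_nonsing_inv _ ((Matrix.isUnit_iff_isUnit_det _).mp hu)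
  have hB1 : B = 1 - E * B := by
    have h := hBr
    rw [add_mul, one_mul] at h
    exact eq_sub_iff_add_eq.mpr h
  have hB2 : B = 1 - B * E := by
    have h := hBl
    rw [mul_add, mul_one] at h
    exact eq_sub_iff_add_eq.mpr h
  have hBnorm : ‖B‖ ≤ 1 / (1 - ‖E‖) := by
    have h1 : ‖B‖ ≤ ‖(1 : Matrix (Fin n) (Fin n) ℝ)‖ + ‖B * E‖ := by
      calc ‖B‖ = ‖(1 : Matrix (Fin n) (Fin n) ℝ) - B * E‖ := by rw [← hB2]
        _ ≤ _ := norm_sub_le _ _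
    have h2 : ‖B * E‖ ≤ ‖B‖ * ‖E‖ := hmul _ _
    rw [le_div_iff₀ h1ε]
    nlinarith
  set R := B - (1 - E) with hRdef
  have hBR : B = 1 - E + R := by rw [hRdef]; abel
  have hR : R = E * E * B := by
    have h1B : (1 : Matrix (Fin n) (Fin n) ℝ) - B = E * B := by
      nth_rewrite 1 [hB1]; abel
    calc R = E - E * B := by rw [hRdef]; nth_rewrite 1 [hB1]; abel
      _ = E * (1 - B) := by noncomm_ring
      _ = E * (E * B) := by rw [h1B]
      _ = E * E * B := by noncomm_ring
  have hRnorm : ‖R‖ ≤ ‖E‖ ^ 2 / (1 - ‖E‖) := by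
    calc ‖R‖ = ‖E * E * B‖ := by rw [hR]
      _ ≤ ‖E * E‖ * ‖B‖ := hmul _ _
      _ ≤ ‖E‖ * ‖E‖ * ‖B‖ := by
          have := hmul E E
          have hBn : (0:ℝ) ≤ ‖B‖ := norm_nonneg _
          nlinarith
      _ ≤ ‖E‖ ^ 2 / (1 - ‖E‖) := by
          rw [sq]
          have : (0:ℝ) ≤ ‖E‖ * ‖E‖ := by positivity
          calc ‖E‖ * ‖E‖ * ‖B‖ ≤ ‖E‖ * ‖E‖ * (1 / (1 - ‖E‖)) := by
                exact mul_le_mul_of_nonneg_left hBnorm this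
            _ = ‖E‖ * ‖E‖ / (1 - ‖E‖) := by ring
  refine ⟨Hhatᵀ * Hhat - (1 - E - Eᵀ), by abel, ?_⟩
  have hHhatB : Hhat = H * B := by rw [hHhat]
  have hkey : Hhatᵀ * Hhat = Bᵀ * B := by
    rw [hHhatB, Matrix.transpose_mul, Matrix.mul_assoc, ← Matrix.mul_assoc Hᵀ H B, hOrth,
      Matrix.one_mul]
  have hBt : Bᵀ = 1 - Eᵀ + Rᵀ := by
    rw [hBR]; simp [Matrix.transpose_add, Matrix.transpose_sub]
  have hΦ : Hhatᵀ * Hhat - (1 - E - Eᵀ) = Eᵀ * E + (1 - Eᵀ) * R + Rᵀ * B := by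
    rw [hkey, hBt, hBR]
    noncomm_ring
  rw [hΦ]
  have h1 : ‖Eᵀ * E‖ ≤ ‖E‖ * ‖E‖ := by
    have := hmul Eᵀ E; rw [htr] at this; exact this
  have h2 : ‖(1 - Eᵀ) * R‖ ≤ (1 + ‖E‖) * (‖E‖ ^ 2 / (1 - ‖E‖)) := by
    have ha : ‖(1 : Matrix (Fin n) (Fin n) ℝ) - Eᵀ‖ ≤ 1 + ‖E‖ := by
      calc ‖(1 : Matrix (Fin n) (Fin n) ℝ) - Eᵀ‖ ≤ ‖(1 : Matrix (Fin n) (Fin n) ℝ)‖ + ‖Eᵀ‖ :=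
            norm_sub_le _ _
        _ ≤ 1 + ‖E‖ := by rw [htr]; linarith
    have := hmul (1 - Eᵀ) R
    have hRn : (0:ℝ) ≤ ‖R‖ := norm_nonneg _
    have hN : (0:ℝ) ≤ ‖(1 : Matrix (Fin n) (Fin n) ℝ) - Eᵀ‖ := norm_nonneg _
    nlinarith
  have h3 : ‖Rᵀ * B‖ ≤ (‖E‖ ^ 2 / (1 - ‖E‖)) * (1 / (1 - ‖E‖)) := by
    have := hmul Rᵀ B
    rw [htr] at this
    have hRn : (0:ℝ) ≤ ‖R‖ := norm_nonneg _
    have hBn : (0:ℝ) ≤ ‖B‖ := norm_nonneg _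
    nlinarith
  have htot : ‖Eᵀ * E + (1 - Eᵀ) * R + Rᵀ * B‖ ≤
      ‖Eᵀ * E‖ + ‖(1 - Eᵀ) * R‖ + ‖Rᵀ * B‖ := by
    calc ‖Eᵀ * E + (1 - Eᵀ) * R + Rᵀ * B‖ ≤ ‖Eᵀ * E + (1 - Eᵀ) * R‖ + ‖Rᵀ * B‖ :=
          norm_add_le _ _
      _ ≤ _ := by have := norm_add_le (Eᵀ * E) ((1 - Eᵀ) * R); linarith
  have harith : ‖E‖ * ‖E‖ + (1 + ‖E‖) * (‖E‖ ^ 2 / (1 - ‖E‖)) +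
      (‖E‖ ^ 2 / (1 - ‖E‖)) * (1 / (1 - ‖E‖)) =
      (3 - 2 * ‖E‖) / (1 - ‖E‖) ^ 2 * ‖E‖ ^ 2 := by
    field_simp
    ring
  linarith
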